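/- Let P ⊂ ℝ^d be a rational d-polytope. Then the set of functions {f : ℤ_{≥0} → ℤ_{≥0} | there exists w ∈ ℝ^d such that f(t) = #((tP + w) ∩ ℤ^d) for all t ∈ ℤ_{≥0}} is finite. -/

import Mathlib

open Set Pointwise

noncomputable section

/-- The lattice `ℤ^d` inside `ℝ^d`. -/
def latticePts (d : ℕ) : Set (Fin d → ℝ) := {x | ∀ i, ∃ n : ℤ, x i = (n : ℝ)}

/-- A point of `ℝ^d` with all coordinates rational. -/
def IsRationalPoint {d : ℕ} (x : Fin d → ℝ) : Prop := ∀ i, ∃ q : ℚ, x i = (q : ℝ)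

/-- A rational `d`-polytope in `ℝ^d`: the convex hull of finitely many rational points
whose affine span is all of `ℝ^d`. -/
def IsRationalDPolytope {d : ℕ} (P : Set (Fin d → ℝ)) : Prop :=
  ∃ V : Finset (Fin d → ℝ), (∀ x ∈ V, IsRationalPoint x) ∧
    P = convexHull ℝ (V : Set (Fin d → ℝ)) ∧ affineSpan ℝ P = ⊤

/-- `TL P v t = #((tP + v) ∩ ℤ^d)`, the translated lattice points enumerator. -/
def TL {d : ℕ} (P : Set (Fin d → ℝ)) (v : Fin d → ℝ) (t : ℕ) : ℕ :=
  (((fun x => (t : ℝ) • x + v) '' P) ∩ latticePts d).ncard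


/-- rational dot product with a real vector -/
def dotq {ι : Type} [Fintype ι] (a : ι → ℚ) (x : ι → ℝ) : ℝ := ∑ j, (a j : ℝ) * x j

def solSet {ι : Type} [Fintype ι] (L : List ((ι → ℚ) × ℚ)) : Set (ι → ℝ) :=
  {x | ∀ p ∈ L, dotq p.1 x ≤ (p.2 : ℝ)}

def extOpt {ι : Type} (x : ι → ℝ) (y : ℝ) : Option ι → ℝ := fun o => o.elim y x

lemma dotq_extOpt {ι : Type} [Fintype ι] (a : Option ι → ℚ) (x : ι → ℝ) (y : ℝ) :
    dotq a (extOpt x y) = (a none : ℝ) * y + dotq (a ∘ some) x := by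
  simp [dotq, extOpt, Fintype.sum_option]

lemma dotq_smul {ι : Type} [Fintype ι] (c : ℚ) (a : ι → ℚ) (x : ι → ℝ) :
    dotq (c • a) x = (c : ℝ) * dotq a x := by
  simp [dotq, Finset.mul_sum, mul_assoc]

lemma dotq_sub {ι : Type} [Fintype ι] (a b : ι → ℚ) (x : ι → ℝ) :
    dotq (a - b) x = dotq a x - dotq b x := by
  simp [dotq, sub_mul, Finset.sum_sub_distrib]

lemma foldr_min_le (l : List ℝ) (s : ℝ) : ∀ u ∈ l, l.foldr min s ≤ u := by
  induction l with
  | nil => intro u hu; simp at hu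
  | cons a t ih =>
    intro u hu
    rcases List.mem_cons.1 hu with h | h
    · subst h; exact min_le_left _ _
    · exact le_trans (min_le_right _ _) (ih u h)

lemma le_foldr_max (l : List ℝ) (s : ℝ) : ∀ u ∈ l, u ≤ l.foldr max s := by
  induction l with
  | nil => intro u hu; simp at hu
  | cons a t ih =>
    intro u hu
    rcases List.mem_cons.1 hu with h | h
    · subst h; exact le_max_left _ _
    · exact le_trans (ih u h) (le_max_right _ _)

lemma le_foldr_min (l : List ℝ) (s : ℝ) (lo : ℝ) (hs : lo ≤ s)
    (h : ∀ u ∈ l, lo ≤ u) : lo ≤ l.foldr min s := by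
  induction l with
  | nil => exact hs
  | cons a t ih =>
    exact le_min (h a List.mem_cons_self) (ih (fun u hu => h u (List.mem_cons.2 (Or.inr hu))))

/-- Fourier–Motzkin elimination step. -/
def fmStep {ι : Type} [Fintype ι] (L : List ((Option ι → ℚ) × ℚ)) :
    List ((ι → ℚ) × ℚ) :=
  (L.filter (fun p => p.1 none = 0)).map (fun p => (p.1 ∘ some, p.2))
  ++ (L.filter (fun p => 0 < p.1 none)).flatMap (fun p =>
      (L.filter (fun p' => p'.1 none < 0)).map (fun p' =>
        (p.1 none • (p'.1 ∘ some) - p'.1 none • (p.1 ∘ some),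
         p.1 none * p'.2 - p'.1 none * p.2)))

theorem fmStep_spec {ι : Type} [Fintype ι] (L : List ((Option ι → ℚ) × ℚ)) :
    solSet (fmStep L) = {x | ∃ y : ℝ, extOpt x y ∈ solSet L} := by
  classical
  ext x
  constructor
  · intro hx
    set lows : List ℝ := (L.filter (fun p => p.1 none < 0)).map
      (fun p => ((p.2 : ℝ) - dotq (p.1 ∘ some) x) / (p.1 none : ℝ)) with hlows
    set ups : List ℝ := (L.filter (fun p => 0 < p.1 none)).map
      (fun p => ((p.2 : ℝ) - dotq (p.1 ∘ some) x) / (p.1 none : ℝ)) with hups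
    set M : ℝ := lows.foldr max 0 with hM
    set y : ℝ := ups.foldr min M with hy
    have hymem : ∀ u ∈ ups, y ≤ u := foldr_min_le ups M
    have hlowup : ∀ lo ∈ lows, ∀ u ∈ ups, lo ≤ u := by
      intro lo hlo u hu
      rw [hlows] at hlo; rw [hups] at hu
      rcases List.mem_map.1 hlo with ⟨p', hp', rfl⟩
      rcases List.mem_map.1 hu with ⟨p, hp, rfl⟩
      rw [List.mem_filter] at hp' hp
      have ha0' : p'.1 none < 0 := by simpa using hp'.2
      have ha0 : (0:ℚ) < p.1 none := by simpa using hp.2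
      have hmm : (p.1 none • (p'.1 ∘ some) - p'.1 none • (p.1 ∘ some),
          p.1 none * p'.2 - p'.1 none * p.2) ∈ fmStep L := by
        refine List.mem_append_right _ ?_
        refine List.mem_flatMap.2 ⟨p, List.mem_filter.2 ⟨hp.1, by simpa using ha0⟩, ?_⟩
        exact List.mem_map.2 ⟨p', List.mem_filter.2 ⟨hp'.1, by simpa using ha0'⟩, rfl⟩
      have hcomb := hx _ hmm
      simp only [dotq_sub, dotq_smul] at hcomb
      have hA : (0:ℝ) < (p.1 none : ℝ) := by exact_mod_cast ha0
      have hA' : ((p'.1 none : ℚ) : ℝ) < 0 := by exact_mod_cast ha0'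
      have h1 : ((p'.2 : ℝ) - dotq (p'.1 ∘ some) x) / (p'.1 none : ℝ) * (p'.1 none : ℝ)
          = (p'.2 : ℝ) - dotq (p'.1 ∘ some) x := div_mul_cancel₀ _ (ne_of_lt hA')
      have h2 : ((p.2 : ℝ) - dotq (p.1 ∘ some) x) / (p.1 none : ℝ) * (p.1 none : ℝ)
          = (p.2 : ℝ) - dotq (p.1 ∘ some) x := div_mul_cancel₀ _ (ne_of_gt hA)
      push_cast at hcomb
      nlinarith [mul_pos hA (neg_pos.2 hA'), h1, h2, hcomb]
    have hlowy : ∀ lo ∈ lows, lo ≤ y := by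
      intro lo hlo
      exact le_foldr_min _ _ _ (le_trans (le_foldr_max lows 0 lo hlo) (le_of_eq hM.symm))
        (fun u hu => hlowup lo hlo u hu)
    refine ⟨y, ?_⟩
    intro p hp
    rw [dotq_extOpt]
    rcases lt_trichotomy (p.1 none) 0 with h0 | h0 | h0
    · have hmem : ((p.2 : ℝ) - dotq (p.1 ∘ some) x) / (p.1 none : ℝ) ∈ lows := by
        rw [hlows]; exact List.mem_map.2 ⟨p, List.mem_filter.2 ⟨hp, by simpa using h0⟩, rfl⟩
      have := hlowy _ hmem
      have hA : ((p.1 none : ℚ) : ℝ) < 0 := by exact_mod_cast h0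
      rw [div_le_iff_of_neg hA] at this
      nlinarith [this]
    · have hmem2 : (p.1 ∘ some, p.2) ∈ fmStep L := by
        refine List.mem_append_left _ ?_
        exact List.mem_map.2 ⟨p, List.mem_filter.2 ⟨hp, by simpa using h0⟩, rfl⟩
      have := hx _ hmem2
      rw [h0]
      simpa using this
    · have hmem : ((p.2 : ℝ) - dotq (p.1 ∘ some) x) / (p.1 none : ℝ) ∈ ups := by
        rw [hups]; exact List.mem_map.2 ⟨p, List.mem_filter.2 ⟨hp, by simpa using h0⟩, rfl⟩
      have := hymem _ hmem
      have hA : (0:ℝ) < ((p.1 none : ℚ) : ℝ) := by exact_mod_cast h0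
      rw [le_div_iff₀ hA] at this
      nlinarith [this]
  · rintro ⟨y, hy⟩
    intro p hp
    rw [fmStep, List.mem_append] at hp
    rcases hp with hp | hp
    · rcases List.mem_map.1 hp with ⟨p', hp', rfl⟩
      rw [List.mem_filter] at hp'
      have h0 : p'.1 none = 0 := by simpa using hp'.2
      have := hy p' hp'.1
      rw [dotq_extOpt, h0] at this
      simpa using this
    · rcases List.mem_flatMap.1 hp with ⟨p1, hp1, hmem⟩
      rcases List.mem_map.1 hmem with ⟨p2, hp2, rfl⟩
      rw [List.mem_filter] at hp1 hp2
      have h1 : (0:ℚ) < p1.1 none := by simpa using hp1.2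
      have h2 : p2.1 none < 0 := by simpa using hp2.2
      have e1 := hy p1 hp1.1
      have e2 := hy p2 hp2.1
      rw [dotq_extOpt] at e1 e2
      simp only [dotq_sub, dotq_smul]
      have hA : (0:ℝ) < (p1.1 none : ℝ) := by exact_mod_cast h1
      have hA' : ((p2.1 none : ℚ) : ℝ) < 0 := by exact_mod_cast h2
      push_cast
      nlinarith [e1, e2, hA, hA']

lemma dotq_reindex {ι κ : Type} [Fintype ι] [Fintype κ] (e : ι ≃ κ)
    (a : ι → ℚ) (x : κ → ℝ) : dotq (a ∘ e.symm) x = dotq a (x ∘ e) := by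
  refine (Fintype.sum_equiv e (fun i => (a i : ℝ) * (x ∘ e) i)
    (fun j => ((a ∘ e.symm) j : ℝ) * x j) (fun i => by simp)).symm

lemma dotq_reindex' {ι κ : Type} [Fintype ι] [Fintype κ] (e : ι ≃ κ)
    (a : κ → ℚ) (x : ι → ℝ) : dotq (a ∘ e) x = dotq a (x ∘ e.symm) := by
  have := dotq_reindex e.symm a x
  simpa using this

lemma dotq_comp {ι κ : Type} [Fintype ι] [Fintype κ] (e : ι ≃ κ)
    (a : κ → ℚ) (x : κ → ℝ) : dotq (a ∘ e) (x ∘ e) = dotq a x :=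
  Equiv.sum_comp e (fun k => (a k : ℝ) * x k)

lemma solSet_reindex {ι κ : Type} [Fintype ι] [Fintype κ] (e : ι ≃ κ)
    (L : List ((ι → ℚ) × ℚ)) :
    solSet (L.map (fun p => (p.1 ∘ e.symm, p.2))) = {x : κ → ℝ | (x ∘ e) ∈ solSet L} := by
  ext x
  simp only [solSet, mem_setOf_eq]
  constructor
  · intro h p hp
    have := h (p.1 ∘ e.symm, p.2) (List.mem_map.2 ⟨p, hp, rfl⟩)
    rwa [dotq_reindex] at this
  · intro h q hq
    rcases List.mem_map.1 hq with ⟨p, hp, rfl⟩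
    rw [dotq_reindex]
    exact h p hp

def sumOptionEquiv (α ι : Type) : (Option α ⊕ ι) ≃ Option (α ⊕ ι) where
  toFun := fun z => match z with
    | .inl none => none
    | .inl (some a) => some (.inl a)
    | .inr i => some (.inr i)
  invFun := fun z => match z with
    | none => .inl none
    | some (.inl a) => .inl (some a)
    | some (.inr i) => .inr i
  left_inv := by rintro ((_|_)|_) <;> rfl
  right_inv := by rintro (_|(_|_)) <;> rfl

theorem elim_block {ι : Type} [Fintype ι] :
    ∀ (κ : Type) [Fintype κ], ∀ (L : List ((κ ⊕ ι → ℚ) × ℚ)),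
      ∃ L' : List ((ι → ℚ) × ℚ),
        solSet L' = {x : ι → ℝ | ∃ z : κ ⊕ ι → ℝ, z ∈ solSet L ∧ ∀ j, z (Sum.inr j) = x j} := by
  refine Fintype.induction_empty_option
    (P := fun κ _ => ∀ (L : List ((κ ⊕ ι → ℚ) × ℚ)),
      ∃ L' : List ((ι → ℚ) × ℚ),
        solSet L' = {x : ι → ℝ | ∃ z : κ ⊕ ι → ℝ, z ∈ solSet L ∧ ∀ j, z (Sum.inr j) = x j})
    ?_ ?_ ?_
  · intro α β hβ e ih L
    letI : Fintype α := Fintype.ofEquiv β e.symm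
    set F : α ⊕ ι ≃ β ⊕ ι := Equiv.sumCongr e (Equiv.refl ι) with hF
    obtain ⟨L', hL'⟩ := ih (L.map (fun p => (p.1 ∘ F, p.2)))
    refine ⟨L', ?_⟩
    rw [hL']
    ext x
    simp only [mem_setOf_eq]
    constructor
    · rintro ⟨z, hz, hc⟩
      refine ⟨z ∘ F.symm, fun p hp => ?_, fun j => by simpa [hF] using hc j⟩
      have h1 := hz (p.1 ∘ F, p.2) (List.mem_map.2 ⟨p, hp, rfl⟩)
      have hd : dotq (p.1 ∘ F) z = dotq p.1 (z ∘ F.symm) := by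
        have := dotq_comp F.symm (p.1 ∘ F) (z)
        calc dotq (p.1 ∘ F) z = dotq ((p.1 ∘ F) ∘ F.symm) (z ∘ F.symm) :=
              (dotq_comp F.symm _ _).symm
          _ = dotq p.1 (z ∘ F.symm) := by
              congr 1
              funext s; simp
      rw [hd] at h1
      exact h1
    · rintro ⟨z, hz, hc⟩
      refine ⟨z ∘ F, fun q hq => ?_, fun j => by simpa [hF] using hc j⟩
      rcases List.mem_map.1 hq with ⟨p, hp, rfl⟩
      have h1 := hz p hp
      have hd : dotq (p.1 ∘ F) (z ∘ F) = dotq p.1 z := dotq_comp F p.1 z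
      rw [hd]
      exact h1
  · intro L
    refine ⟨L.map (fun p => (p.1 ∘ Sum.inr, p.2)), ?_⟩
    ext x
    simp only [mem_setOf_eq]
    constructor
    · intro h
      refine ⟨Sum.elim (fun a => (a.elim : ℝ)) x, ?_, fun j => rfl⟩
      intro p hp
      have := h (p.1 ∘ Sum.inr, p.2) (List.mem_map.2 ⟨p, hp, rfl⟩)
      simp only [dotq, Fintype.sum_sum_type] at this ⊢
      simpa using this
    · rintro ⟨z, hz, hcoord⟩
      intro q hq
      rcases List.mem_map.1 hq with ⟨p, hp, rfl⟩
      have := hz p hp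
      simp only [dotq, Fintype.sum_sum_type] at this ⊢
      have h0 : ∑ a : PEmpty, (p.1 (Sum.inl a) : ℝ) * z (Sum.inl a) = 0 := by simp
      rw [h0, zero_add] at this
      calc ∑ j, ((p.1 ∘ Sum.inr) j : ℝ) * x j
          = ∑ j, (p.1 (Sum.inr j) : ℝ) * z (Sum.inr j) := by
            refine Finset.sum_congr rfl fun j _ => ?_
            rw [Function.comp_apply, hcoord j]
        _ ≤ (p.2 : ℝ) := this
  · intro α _ ih L
    set E := sumOptionEquiv α ι with hE
    set L1 := L.map (fun p => (p.1 ∘ E.symm, p.2)) with hL1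
    obtain ⟨L2, hL2⟩ : ∃ L2 : List ((α ⊕ ι → ℚ) × ℚ),
      solSet L2 = {x | ∃ y : ℝ, extOpt x y ∈ solSet L1} := ⟨fmStep L1, fmStep_spec L1⟩
    obtain ⟨L', hL'⟩ := ih L2
    refine ⟨L', ?_⟩
    rw [hL']
    ext x
    simp only [mem_setOf_eq]
    constructor
    · rintro ⟨z, hz2, hcoord⟩
      rw [hL2] at hz2
      obtain ⟨y, hy⟩ := hz2
      rw [hL1, solSet_reindex] at hy
      refine ⟨(extOpt z y) ∘ E, hy, ?_⟩
      intro j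
      have : E (Sum.inr j) = some (Sum.inr j) := rfl
      rw [Function.comp_apply, this]
      exact hcoord j
    · rintro ⟨Z, hZ, hcoord⟩
      set y := Z (Sum.inl none) with hy
      set z : α ⊕ ι → ℝ := fun s => Z (E.symm (some s)) with hz
      have hext : extOpt z y = Z ∘ E.symm := by
        funext o
        cases o with
        | none => rfl
        | some s => rfl
      refine ⟨z, ?_, ?_⟩
      · rw [hL2]
        refine ⟨y, ?_⟩
        rw [hL1, solSet_reindex]
        rw [hext]
        have : (Z ∘ E.symm) ∘ E = Z := by funext j; simp
        rw [mem_setOf_eq, this]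
        exact hZ
      · intro j
        have : E.symm (some (Sum.inr j)) = Sum.inr j := rfl
        rw [hz]
        simp only [this]
        exact hcoord j

lemma dotq_neg {ι : Type} [Fintype ι] (a : ι → ℚ) (x : ι → ℝ) :
    dotq (-a) x = -dotq a x := by
  simp [dotq, Finset.sum_neg_distrib]

lemma dotq_sum_elim {κ : Type} [Fintype κ] {d : ℕ} (f : κ → ℚ) (g : Fin d → ℚ)
    (z : κ ⊕ Fin d → ℝ) :
    dotq (Sum.elim f g) z
      = ∑ k, (f k : ℝ) * z (Sum.inl k) + ∑ j, (g j : ℝ) * z (Sum.inr j) := by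
  simp [dotq, Fintype.sum_sum_type]

theorem weyl {d : ℕ} (V : Finset (Fin d → ℝ)) (hV : ∀ x ∈ V, IsRationalPoint x) :
    ∃ L : List ((Fin d → ℚ) × ℚ), convexHull ℝ (V : Set (Fin d → ℝ)) = solSet L := by
  classical
  -- rational coordinates of the vertices
  set κ := {y // y ∈ V} with hκ
  have hQ : ∀ k : κ, ∀ j, ∃ q : ℚ, (k : Fin d → ℝ) j = (q : ℝ) :=
    fun k j => hV k k.2 j
  choose Q hQspec using hQ
  -- constraint vectors
  set aSum : κ ⊕ Fin d → ℚ := Sum.elim (fun _ => 1) (fun _ => 0) with haSum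
  set aNeg : κ → (κ ⊕ Fin d → ℚ) :=
    fun k => Sum.elim (fun k' => if k' = k then (-1 : ℚ) else 0) (fun _ => 0) with haNeg
  set aCoord : Fin d → (κ ⊕ Fin d → ℚ) :=
    fun j => Sum.elim (fun k => Q k j) (fun j' => if j' = j then (-1 : ℚ) else 0) with haCoord
  set Lfull : List ((κ ⊕ Fin d → ℚ) × ℚ) :=
    [(aSum, 1), (-aSum, -1)]
    ++ V.attach.toList.map (fun k => (aNeg k, (0 : ℚ)))
    ++ (List.finRange d).flatMap (fun j => [(aCoord j, (0:ℚ)), (-(aCoord j), (0:ℚ))]) with hLfull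
  obtain ⟨L, hL⟩ := elim_block (ι := Fin d) κ Lfull
  refine ⟨L, ?_⟩
  rw [hL]
  ext x
  simp only [mem_setOf_eq]
  rw [Finset.convexHull_eq]
  simp only [mem_setOf_eq]
  constructor
  · -- from convex combination to solution
    rintro ⟨w, hw0, hwsum, hwc⟩
    refine ⟨Sum.elim (fun k => w k.1) x, ?_, fun j => rfl⟩
    have hsum_eq : ∑ k : κ, w k.1 = 1 := by
      rw [← hwsum]; exact Finset.sum_attach V w
    have hcm : ∀ j, ∑ k : κ, (Q k j : ℝ) * w k.1 = x j := by
      intro j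
      have h1 : V.centerMass w id = ∑ y ∈ V, w y • y := by
        simp [Finset.centerMass, hwsum]
      have h2 : (∑ y ∈ V, w y • y) j = ∑ y ∈ V, w y * y j := by
        rw [Finset.sum_apply]; simp
      have h3 : ∑ y ∈ V, w y * y j = ∑ k : κ, w k.1 * (k : Fin d → ℝ) j :=
        (Finset.sum_attach V (fun y => w y * y j)).symm
      have h4 : ∀ k : κ, w k.1 * (k : Fin d → ℝ) j = (Q k j : ℝ) * w k.1 := by
        intro k; rw [hQspec k j]; ring
      calc ∑ k : κ, (Q k j : ℝ) * w k.1 = ∑ k : κ, w k.1 * (k : Fin d → ℝ) j := by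
            refine Finset.sum_congr rfl fun k _ => (h4 k).symm
        _ = ∑ y ∈ V, w y * y j := h3.symm
        _ = (∑ y ∈ V, w y • y) j := h2.symm
        _ = (V.centerMass w id) j := by rw [h1]
        _ = x j := by rw [hwc]
    intro p hp
    rw [hLfull] at hp
    simp only [List.mem_append, List.mem_cons, List.mem_map, List.mem_flatMap,
      List.mem_finRange, List.mem_singleton, List.not_mem_nil, or_false] at hp
    rcases hp with ((rfl | rfl) | ⟨k, hk, rfl⟩) | ⟨j, hj, hpj⟩
    · rw [dotq_sum_elim]
      simp [hsum_eq]
    · rw [show (-aSum, (-1:ℚ)).1 = -aSum from rfl, dotq_neg, dotq_sum_elim]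
      simp [hsum_eq]
    · rw [dotq_sum_elim]
      have : ∑ k' : κ, ((if k' = k then (-1:ℚ) else 0 : ℚ) : ℝ) * (Sum.elim (fun k => w k.1) x) (Sum.inl k')
          = -(w k.1) := by
        rw [Finset.sum_eq_single k]
        · simp
        · intro b _ hb; simp [hb]
        · simp
      simp only [haNeg, Sum.elim_inl, Sum.elim_inr] at *
      rw [this]
      simp only [Rat.cast_zero, zero_mul, Finset.sum_const_zero, add_zero]
      have := hw0 k.1 k.2
      push_cast
      linarith
    · have hcoordval : dotq (aCoord j) (Sum.elim (fun k => w k.1) x) = 0 := by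
        rw [haCoord]
        rw [dotq_sum_elim]
        have h5 : ∑ j', ((if j' = j then (-1:ℚ) else 0 : ℚ) : ℝ) * x j' = -(x j) := by
          rw [Finset.sum_eq_single j]
          · simp
          · intro b _ hb; simp [hb]
          · simp
        simp only [Sum.elim_inl, Sum.elim_inr]
        rw [h5, hcm j]
        ring
      rcases hpj with rfl | rfl
      · rw [hcoordval]; norm_num
      · show dotq (-(aCoord j)) _ ≤ _
        rw [dotq_neg, hcoordval]; norm_num
  · -- from solution to convex combination
    rintro ⟨z, hz, hcoord⟩
    set w : (Fin d → ℝ) → ℝ := fun y => if h : y ∈ V then z (Sum.inl ⟨y, h⟩) else 0 with hw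
    have hwk : ∀ k : κ, w k.1 = z (Sum.inl k) := by
      intro k; rw [hw]; simp only [k.2, dif_pos]; rfl
    have hmem : ∀ p ∈ Lfull, dotq p.1 z ≤ (p.2 : ℝ) := hz
    -- sum = 1
    have hs1 : dotq aSum z ≤ 1 := by
      have := hmem (aSum, 1) (by rw [hLfull]; simp)
      simpa using this
    have hs2 : dotq (-aSum) z ≤ -1 := by
      have := hmem (-aSum, -1) (by rw [hLfull]; simp)
      simpa using this
    rw [dotq_neg] at hs2
    have hsum : dotq aSum z = 1 := le_antisymm hs1 (by linarith)
    have hsumz : ∑ k : κ, z (Sum.inl k) = 1 := by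
      rw [haSum, dotq_sum_elim] at hsum
      simpa using hsum
    -- nonneg
    have hnn : ∀ k : κ, 0 ≤ z (Sum.inl k) := by
      intro k
      have := hmem (aNeg k, 0) (by
        rw [hLfull]
        refine List.mem_append.2 (Or.inl ?_)
        refine List.mem_append.2 (Or.inr ?_)
        exact List.mem_map.2 ⟨k, Finset.mem_toList.2 (Finset.mem_attach V k), rfl⟩)
      rw [haNeg, dotq_sum_elim] at this
      have heq : ∑ k' : κ, ((if k' = k then (-1:ℚ) else 0 : ℚ) : ℝ) * z (Sum.inl k')
          = -(z (Sum.inl k)) := by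
        rw [Finset.sum_eq_single k]
        · simp
        · intro b _ hb; simp [hb]
        · simp
      simp only [Sum.elim_inl, Sum.elim_inr] at this
      rw [heq] at this
      simp only [Rat.cast_zero, zero_mul, Finset.sum_const_zero, add_zero] at this
      linarith [this]
    -- coords
    have hco : ∀ j, ∑ k : κ, (Q k j : ℝ) * z (Sum.inl k) = x j := by
      intro j
      have h1 := hmem (aCoord j, 0) (by
        rw [hLfull]
        refine List.mem_append.2 (Or.inr ?_)
        exact List.mem_flatMap.2 ⟨j, by simp, by simp⟩)
      have h2 := hmem (-(aCoord j), 0) (by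
        rw [hLfull]
        refine List.mem_append.2 (Or.inr ?_)
        exact List.mem_flatMap.2 ⟨j, by simp, by simp⟩)
      rw [dotq_neg] at h2
      have heq : dotq (aCoord j) z = 0 := le_antisymm (by simpa using h1) (by
        have : -dotq (aCoord j) z ≤ 0 := by simpa using h2
        linarith)
      rw [haCoord, dotq_sum_elim] at heq
      have h5 : ∑ j', ((if j' = j then (-1:ℚ) else 0 : ℚ) : ℝ) * z (Sum.inr j') = -(z (Sum.inr j)) := by
        rw [Finset.sum_eq_single j]
        · simp
        · intro b _ hb; simp [hb]
        · simp
      try simp only [Sum.elim_inl, Sum.elim_inr] at heq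
      rw [h5] at heq
      have := hcoord j
      rw [this] at heq
      linarith [heq]
    refine ⟨w, ?_, ?_, ?_⟩
    · intro y hy
      rw [hw]; simp only [hy, dif_pos]
      exact hnn ⟨y, hy⟩
    · rw [← Finset.sum_attach V w]
      calc ∑ k : κ, w k.1 = ∑ k : κ, z (Sum.inl k) := Finset.sum_congr rfl fun k _ => hwk k
        _ = 1 := hsumz
    · have hwsum : ∑ y ∈ V, w y = 1 := by
        rw [← Finset.sum_attach V w]
        calc ∑ k : κ, w k.1 = ∑ k : κ, z (Sum.inl k) := Finset.sum_congr rfl fun k _ => hwk k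
          _ = 1 := hsumz
      rw [show V.centerMass w id = ∑ y ∈ V, w y • y by simp [Finset.centerMass, hwsum]]
      funext j
      rw [Finset.sum_apply]
      have h3 : ∑ y ∈ V, (w y • y) j = ∑ k : κ, (w k.1 • (k : Fin d → ℝ)) j :=
        (Finset.sum_attach V (fun y => (w y • y) j)).symm
      rw [h3]
      calc ∑ k : κ, (w k.1 • (k : Fin d → ℝ)) j
          = ∑ k : κ, (Q k j : ℝ) * z (Sum.inl k) := by
            refine Finset.sum_congr rfl fun k _ => ?_
            rw [Pi.smul_apply, smul_eq_mul, hwk k, hQspec k j]; ring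
        _ = x j := hco j

lemma int_of_den_dvd (q : ℚ) (D : ℕ) (h : q.den ∣ D) : ∃ z : ℤ, (z : ℚ) = q * D := by
  obtain ⟨c, hc⟩ := h
  refine ⟨q.num * c, ?_⟩
  subst hc
  push_cast
  rw [← mul_assoc, Rat.mul_den_eq_num]

/-- integerize one rational inequality -/
lemma integerize (a : Fin d → ℚ) (b : ℚ) :
    ∃ (A : Fin d → ℤ) (B : ℤ) (D : ℕ), 0 < D ∧ (∀ j, ((A j : ℚ)) = a j * D) ∧ ((B : ℚ) = b * D) := by
  classical
  set D : ℕ := b.den * ∏ j, (a j).den with hD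
  have hDpos : 0 < D := by
    rw [hD]
    exact Nat.mul_pos b.pos (Finset.prod_pos (fun j _ => (a j).pos))
  have hbd : b.den ∣ D := Dvd.intro _ rfl
  have had : ∀ j, (a j).den ∣ D := fun j =>
    Dvd.dvd.mul_left (Finset.dvd_prod_of_mem (fun j => (a j).den) (Finset.mem_univ j)) _
  choose A hA using fun j => int_of_den_dvd (a j) D (had j)
  obtain ⟨B, hB⟩ := int_of_den_dvd b D hbd
  exact ⟨A, B, D, hDpos, hA, hB⟩


lemma TL_fract {d : ℕ} (P : Set (Fin d → ℝ)) (w : Fin d → ℝ) (t : ℕ) :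
    TL P w t = TL P (fun i => Int.fract (w i)) t := by
  have hlat : ∀ (x : Fin d → ℝ) (v : Fin d → ℤ), x ∈ latticePts d →
      (fun j => x j + (v j : ℝ)) ∈ latticePts d := by
    intro x v hx j
    obtain ⟨n, hn⟩ := hx j
    exact ⟨n + v j, by push_cast; rw [hn]⟩
  have hset : ((fun x => (t : ℝ) • x + w) '' P) ∩ latticePts d
      = (fun x => x + fun i => ((⌊w i⌋ : ℤ) : ℝ)) ''
        (((fun x => (t : ℝ) • x + fun i => Int.fract (w i)) '' P) ∩ latticePts d) := by
    ext x
    constructor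
    · rintro ⟨⟨y, hy, rfl⟩, hxl⟩
      refine ⟨(t : ℝ) • y + fun i => Int.fract (w i), ⟨⟨y, hy, rfl⟩, ?_⟩, ?_⟩
      · have heq : ((t : ℝ) • y + fun i => Int.fract (w i))
            = fun j => ((t : ℝ) • y + w) j + ((-⌊w j⌋ : ℤ) : ℝ) := by
          funext j
          simp only [Pi.add_apply, Pi.smul_apply, smul_eq_mul, Int.fract]
          push_cast
          ring
        rw [heq]
        exact hlat _ _ hxl
      · funext j
        simp only [Pi.add_apply, Pi.smul_apply, smul_eq_mul, Int.fract]
        ring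
    · rintro ⟨z, ⟨⟨y, hy, rfl⟩, hzl⟩, rfl⟩
      constructor
      · refine ⟨y, hy, ?_⟩
        funext j
        simp only [Pi.add_apply, Pi.smul_apply, smul_eq_mul, Int.fract]
        ring
      · have heq : ((fun x => (t : ℝ) • x + fun i => Int.fract (w i)) y + fun i => ((⌊w i⌋ : ℤ) : ℝ))
            = fun j => ((t:ℝ) • y + fun i => Int.fract (w i)) j + ((⌊w j⌋ : ℤ) : ℝ) := by
          funext j; rfl
        show (((fun x => (t : ℝ) • x + fun i => Int.fract (w i)) y) + fun i => ((⌊w i⌋ : ℤ) : ℝ))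
          ∈ latticePts d
        rw [heq]
        exact hlat _ _ hzl
  rw [TL, TL, hset, Set.ncard_image_of_injective _ (add_left_injective _)]

theorem stmt5 {d : ℕ} (P : Set (Fin d → ℝ)) (hP : IsRationalDPolytope P) :
    {f : ℕ → ℕ | ∃ w : Fin d → ℝ, ∀ t : ℕ, f t = TL P w t}.Finite := by
  classical
  obtain ⟨V, hVrat, hPconv, hspan⟩ := hP
  obtain ⟨L, hLsol⟩ := weyl V hVrat
  have hPsol : P = solSet L := hPconv.trans hLsol
  have hPne : P.Nonempty := by
    have h := affineSpan_nonempty (k := ℝ) (s := P)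
    rw [hspan] at h
    exact h.1 ⟨0, trivial⟩
  set m := L.length with hm
  have key : ∀ i : Fin m, ∃ (A : Fin d → ℤ) (B : ℤ) (D : ℕ), 0 < D ∧
      (∀ j, ((A j : ℚ)) = (L.get i).1 j * D) ∧ ((B : ℚ) = (L.get i).2 * D) :=
    fun i => integerize _ _
  choose A B D hD hA hB using key
  -- the integer linear forms, evaluated on reals
  set S : Fin m → (Fin d → ℝ) → ℝ := fun i x => ∑ j, ((A i j : ℤ) : ℝ) * x j with hS
  have hSD : ∀ i x, S i x = (D i : ℝ) * dotq (L.get i).1 x := by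
    intro i x
    rw [hS]
    simp only
    rw [dotq, Finset.mul_sum]
    refine Finset.sum_congr rfl fun j _ => ?_
    have hcast : ((A i j : ℤ) : ℝ) = (((L.get i).1 j : ℚ) : ℝ) * ((D i : ℕ) : ℝ) := by
      exact_mod_cast hA i j
    rw [hcast]
    ring
  have hBD : ∀ i, (B i : ℝ) = (D i : ℝ) * ((L.get i).2 : ℝ) := by
    intro i
    have hcast : ((B i : ℤ) : ℝ) = (((L.get i).2 : ℚ) : ℝ) * ((D i : ℕ) : ℝ) := by
      exact_mod_cast hB i
    rw [hcast]
    ring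
  have hmemP : ∀ x, x ∈ P ↔ ∀ i : Fin m, S i x ≤ (B i : ℝ) := by
    intro x
    rw [hPsol]
    constructor
    · intro h i
      have := h (L.get i) (L.get_mem i)
      rw [hSD, hBD]
      have hDpos : (0:ℝ) < (D i : ℝ) := by exact_mod_cast hD i
      nlinarith [this]
    · intro h p hp
      rw [List.mem_iff_get] at hp
      obtain ⟨i, rfl⟩ := hp
      have := h i
      rw [hSD, hBD] at this
      have hDpos : (0:ℝ) < (D i : ℝ) := by exact_mod_cast hD i
      nlinarith [this]
  -- linearity of S
  have hSlin : ∀ i (c : ℝ) (x y : Fin d → ℝ), S i (fun j => c * (x j - y j)) = c * (S i x - S i y) := by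
    intro i c x y
    rw [hS]
    show ∑ j, ((A i j : ℤ) : ℝ) * (c * (x j - y j))
      = c * ((∑ j, ((A i j : ℤ) : ℝ) * x j) - ∑ j, ((A i j : ℤ) : ℝ) * y j)
    rw [← Finset.sum_sub_distrib, Finset.mul_sum]
    exact Finset.sum_congr rfl fun j _ => by ring
  have hTLfract : ∀ (w : Fin d → ℝ) (t : ℕ), TL P w t = TL P (fun i => Int.fract (w i)) t :=
    fun w t => TL_fract P w t
  -- bound constants
  set C : Fin m → ℤ := fun i => ∑ j, |A i j| with hC
  -- the classifying function
  set G : (Fin m → ℤ) × ℕ → (ℕ → ℕ) := fun p t =>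
    if t = 0 then p.2
    else {x ∈ latticePts d | ∀ i, S i x ≤ (((t : ℤ) * B i + p.1 i : ℤ) : ℝ)}.ncard with hG
  set Sbox : Set ((Fin m → ℤ) × ℕ) :=
    (Set.univ.pi (fun i => Set.Icc (-(C i) - 1) (C i + 1))) ×ˢ (Set.Iic 1) with hSbox
  have hSboxfin : Sbox.Finite := by
    rw [hSbox]
    exact Set.Finite.prod (Set.Finite.pi (fun i => Set.finite_Icc _ _)) (Set.finite_Iic 1)
  refine Set.Finite.subset (hSboxfin.image G) ?_
  rintro f ⟨w, hf⟩
  set r : Fin d → ℝ := fun i => Int.fract (w i) with hr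
  have hr01 : ∀ i, 0 ≤ r i ∧ r i < 1 := fun i => ⟨Int.fract_nonneg _, Int.fract_lt_one _⟩
  set n : Fin m → ℤ := fun i => ⌊S i r⌋ with hn
  set v : ℕ := TL P r 0 with hv
  -- bound on S i r
  have hSr_bound : ∀ i, |S i r| ≤ (C i : ℝ) := by
    intro i
    rw [hS, hC]
    push_cast
    refine (Finset.abs_sum_le_sum_abs _ _).trans ?_
    refine Finset.sum_le_sum fun j _ => ?_
    rw [abs_mul]
    have h1 : |r j| ≤ 1 := by
      rw [abs_of_nonneg (hr01 j).1]; exact le_of_lt (hr01 j).2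
    calc |((A i j : ℤ) : ℝ)| * |r j| ≤ |((A i j : ℤ) : ℝ)| * 1 :=
          mul_le_mul_of_nonneg_left h1 (abs_nonneg _)
      _ = |((A i j : ℤ) : ℝ)| := mul_one _
  have hnmem : ∀ i, n i ∈ Set.Icc (-(C i) - 1) (C i + 1) := by
    intro i
    constructor
    · rw [hn]
      rw [Int.le_floor]
      push_cast
      have := (abs_le.1 (hSr_bound i)).1
      linarith
    · rw [hn]
      have h2 := (abs_le.1 (hSr_bound i)).2
      have : (⌊S i r⌋ : ℝ) ≤ (C i : ℝ) := le_trans (Int.floor_le _) h2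
      have h3 : ⌊S i r⌋ ≤ C i := by exact_mod_cast this
      show ⌊S i r⌋ ≤ C i + 1
      omega
  have hv1 : v ≤ 1 := by
    rw [hv, TL]
    have himg : ((fun x => ((0:ℕ) : ℝ) • x + r) '' P) = {r} := by
      ext z
      simp only [Nat.cast_zero, zero_smul, zero_add, mem_image, mem_singleton_iff]
      constructor
      · rintro ⟨y, _, rfl⟩; rfl
      · rintro rfl; exact ⟨hPne.choose, hPne.choose_spec, rfl⟩
    rw [himg]
    calc ({r} ∩ latticePts d).ncard ≤ ({r} : Set (Fin d → ℝ)).ncard :=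
          Set.ncard_le_ncard inter_subset_left (Set.finite_singleton r)
      _ = 1 := Set.ncard_singleton r
  refine ⟨(n, v), ⟨fun i _ => hnmem i, hv1⟩, ?_⟩
  -- show G (n, v) = f
  funext t
  rw [hG]
  simp only
  cases t with
  | zero => rw [if_pos rfl, hf 0, hTLfract w 0, ← hr, ← hv]
  | succ s =>
    rw [if_neg (Nat.succ_ne_zero s), hf (s+1), hTLfract w (s+1), ← hr]
    rw [TL]
    congr 1
    set T : ℝ := ((s+1 : ℕ) : ℝ) with hT
    have hTpos : (0:ℝ) < T := by rw [hT]; positivity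
    ext x
    simp only [mem_inter_iff, mem_image, mem_setOf_eq, mem_sep_iff]
    constructor
    · rintro ⟨hxl, hxi⟩
      obtain ⟨x', hx'⟩ : ∃ x' : Fin d → ℤ, ∀ j, x j = (x' j : ℝ) := by
        choose g hg using hxl
        exact ⟨g, hg⟩
      -- x satisfies the floor inequalities; show x ∈ image
      refine ⟨⟨fun j => T⁻¹ * (x j - r j), ?_, ?_⟩, hxl⟩
      · rw [hmemP]
        intro i
        have hx1 := hxi i
        -- S i x is an integer
        have hZ : S i x = ((∑ j, A i j * x' j : ℤ) : ℝ) := by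
          rw [hS]; push_cast
          exact Finset.sum_congr rfl fun j _ => by rw [hx' j]
        -- now divide
        have hSxle : S i x ≤ T * (B i : ℝ) + S i r := by
          have hfl : ((n i : ℤ) : ℝ) ≤ S i r := by
            show ((⌊S i r⌋ : ℤ) : ℝ) ≤ S i r
            exact Int.floor_le _
          have hx2 : S i x ≤ ((((s+1 : ℕ) : ℤ) * B i + n i : ℤ) : ℝ) := hx1
          push_cast at hx2
          rw [hT]
          push_cast
          linarith
        have := hSlin i T⁻¹ x r
        rw [this]
        have h2 : S i x - S i r ≤ T * (B i : ℝ) := by linarith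
        rw [inv_mul_le_iff₀ hTpos]
        linarith
      · funext j
        simp only [Pi.add_apply, Pi.smul_apply, smul_eq_mul]
        field_simp
        ring
    · rintro ⟨⟨y, hy, rfl⟩, hxl⟩
      refine ⟨hxl, ?_⟩
      intro i
      rw [hmemP] at hy
      have hyi := hy i
      -- S i (T•y + r) = T * S i y + S i r
      have hval : S i ((fun x => T • x + r) y) = T * S i y + S i r := by
        rw [hS]
        simp only [Pi.add_apply, Pi.smul_apply, smul_eq_mul]
        rw [Finset.mul_sum, ← Finset.sum_add_distrib]
        refine Finset.sum_congr rfl fun j _ => by ring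
      obtain ⟨x', hx'⟩ : ∃ x' : Fin d → ℤ, ∀ j, ((fun x => T • x + r) y) j = (x' j : ℝ) := by
        choose g hg using hxl
        exact ⟨g, hg⟩
      have hZ : S i ((fun x => T • x + r) y) = ((∑ j, A i j * x' j : ℤ) : ℝ) := by
        rw [hS]; push_cast
        refine Finset.sum_congr rfl fun j _ => ?_
        rw [← hx' j]
      have hle : S i ((fun x => T • x + r) y) ≤ T * (B i : ℝ) + S i r := by
        rw [hval]
        nlinarith [hyi, hTpos]
      -- integer ≤ real implies integer ≤ floor
      have hfloor : (∑ j, A i j * x' j : ℤ) ≤ ⌊T * (B i : ℝ) + S i r⌋ := by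
        rw [Int.le_floor]
        rw [← hZ]
        exact hle
      have hflcomp : ⌊T * (B i : ℝ) + S i r⌋ = ((s+1 : ℕ) : ℤ) * B i + n i := by
        have h6 : T * (B i : ℝ) = ((((s+1 : ℕ) : ℤ) * B i : ℤ) : ℝ) := by
          rw [hT]; push_cast; ring
        rw [h6, Int.floor_intCast_add]
      rw [hflcomp] at hfloor
      rw [hZ]
      exact_mod_cast hfloor
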